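/- In the two-occasion setting, suppose (i) consistency and positivity hold; (ii) Assumptions of sequential proximal latent randomization hold: (Z(1), A(1)) ⟂ (W(0)-potential, W(1)-potential, Y-potential) | (A(0), X̄(1), Ū(1)) and (Z(0), A(0)) ⟂ (W(0)-potential, Y-potential) | (X(0), U(0)); (iii) outcome bridge functions h1, h0 satisfy E[H1(ā(1)) | ā(1), ū(1), x̄(1)] = E[Y | ā(1), ū(1), x̄(1)] and E[Y_{ā(1)} | a(0), u(0), x(0)] = E[H0(ā(1)) | a(0), u(0), x(0)], where H1(ā(1)) = h1(W̄(1), ā(1), X̄(1)) and H0(ā(1)) = h0(W(0), ā(1), X(0)). Then E[Y_{ā(1)} | V] = E[h0(W(0), ā(1), X(0)) | V] for any baseline V ⊂ X(0). -/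

import Mathlib

open Finset MeasureTheory

open scoped Classical

/-- Probability of an event on a finite outcome space with mass function `p`. -/
noncomputable def pr {Ω : Type*} [Fintype Ω] (p : Ω → ℝ) (E : Ω → Prop) : ℝ :=
  ∑ ω, if E ω then p ω else 0

/-- Conditional expectation `E[f | E]` on a finite outcome space. -/
noncomputable def cexp {Ω : Type*} [Fintype Ω] (p : Ω → ℝ) (f : Ω → ℝ) (E : Ω → Prop) : ℝ :=
  (∑ ω, if E ω then p ω * f ω else 0) / pr p E

/-- Conditional probability `P(E | F)` on a finite outcome space. -/
noncomputable def cprob {Ω : Type*} [Fintype Ω] (p : Ω → ℝ) (E F : Ω → Prop) : ℝ :=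
  pr p (fun ω => E ω ∧ F ω) / pr p F

/-- Expectation on a finite outcome space. -/
noncomputable def pexp {Ω : Type*} [Fintype Ω] (p : Ω → ℝ) (f : Ω → ℝ) : ℝ :=
  ∑ ω, p ω * f ω

/-- `S` is conditionally independent of `T` given `C`:  for every pair of (bounded) test
functions `F, G` and every value `c` of `C` with positive probability, the conditional
expectation of the product factorizes. -/
def CondIndep {Ω α β γ : Type*} [Fintype Ω] (p : Ω → ℝ)
    (S : Ω → α) (T : Ω → β) (C : Ω → γ) : Prop :=
  ∀ (F : α → ℝ) (G : β → ℝ) (c : γ), pr p (fun ω => C ω = c) ≠ 0 →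
    cexp p (fun ω => F (S ω) * G (T ω)) (fun ω => C ω = c) =
      cexp p (fun ω => F (S ω)) (fun ω => C ω = c) *
        cexp p (fun ω => G (T ω)) (fun ω => C ω = c)

section Helpers
variable {Ω : Type*} [Fintype Ω]

/-- Unnormalized conditional sum `∑_{ω ∈ E} p ω f ω`. -/
noncomputable def wsum (p : Ω → ℝ) (f : Ω → ℝ) (E : Ω → Prop) : ℝ :=
  ∑ ω, if E ω then p ω * f ω else 0

lemma cexp_def (p : Ω → ℝ) (f : Ω → ℝ) (E : Ω → Prop) :
    cexp p f E = wsum p f E / pr p E := rfl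

lemma pr_congr (p : Ω → ℝ) {E F : Ω → Prop} (h : ∀ ω, E ω ↔ F ω) :
    pr p E = pr p F := by
  unfold pr
  exact Finset.sum_congr rfl fun ω _ => if_congr (h ω) rfl rfl

lemma wsum_congr (p : Ω → ℝ) {f g : Ω → ℝ} {E F : Ω → Prop}
    (hEF : ∀ ω, E ω ↔ F ω) (hfg : ∀ ω, E ω → f ω = g ω) :
    wsum p f E = wsum p g F := by
  unfold wsum
  refine Finset.sum_congr rfl fun ω _ => ?_
  by_cases h : E ω
  · rw [if_pos h, if_pos ((hEF ω).1 h), hfg ω h]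
  · rw [if_neg h, if_neg fun hf => h ((hEF ω).2 hf)]

lemma cexp_congr (p : Ω → ℝ) {f g : Ω → ℝ} {E F : Ω → Prop}
    (hEF : ∀ ω, E ω ↔ F ω) (hfg : ∀ ω, E ω → f ω = g ω) :
    cexp p f E = cexp p g F := by
  rw [cexp_def, cexp_def, pr_congr p hEF, wsum_congr p hEF hfg]

lemma wsum_sub (p : Ω → ℝ) (f g : Ω → ℝ) (E : Ω → Prop) :
    wsum p (fun ω => f ω - g ω) E = wsum p f E - wsum p g E := by
  unfold wsum
  rw [← Finset.sum_sub_distrib]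
  exact Finset.sum_congr rfl fun ω _ => by split_ifs <;> ring

lemma pr_zero_of (p : Ω → ℝ) (hp : ∀ ω, 0 ≤ p ω) {E : Ω → Prop}
    (h : pr p E = 0) {ω : Ω} (hω : E ω) : p ω = 0 := by
  have hnn : ∀ x ∈ Finset.univ, 0 ≤ (if E x then p x else 0 : ℝ) := by
    intro x _; split_ifs; exacts [hp x, le_refl 0]
  have := (Finset.sum_eq_zero_iff_of_nonneg hnn).1 h ω (Finset.mem_univ ω)
  rwa [if_pos hω] at this

lemma wsum_eq_cexp_mul_pr (p : Ω → ℝ) (f : Ω → ℝ) {E : Ω → Prop}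
    (hE : pr p E ≠ 0) : wsum p f E = cexp p f E * pr p E := by
  rw [cexp_def, div_mul_cancel₀ _ hE]

lemma cexp_cond {α β γ : Type*} (p : Ω → ℝ) {S : Ω → α} {T : Ω → β} {C : Ω → γ}
    (hCI : CondIndep p S T C) (A : α → Prop) (G : β → ℝ) (c : γ)
    (hc : pr p (fun ω => C ω = c) ≠ 0)
    (hA : pr p (fun ω => A (S ω) ∧ C ω = c) ≠ 0) :
    cexp p (fun ω => G (T ω)) (fun ω => A (S ω) ∧ C ω = c) =
      cexp p (fun ω => G (T ω)) (fun ω => C ω = c) := by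
  have h := hCI (fun s => if A s then 1 else 0) G c hc
  have e1 : cexp p (fun ω => (fun s => if A s then (1:ℝ) else 0) (S ω) * G (T ω))
      (fun ω => C ω = c) =
      wsum p (fun ω => G (T ω)) (fun ω => A (S ω) ∧ C ω = c) / pr p (fun ω => C ω = c) := by
    rw [cexp_def]
    congr 1
    unfold wsum
    refine Finset.sum_congr rfl fun ω _ => ?_
    by_cases h1 : C ω = c <;> by_cases h2 : A (S ω)
    · rw [if_pos h1, if_pos (⟨h2, h1⟩ : A (S ω) ∧ C ω = c)]
      simp [h2]
    · rw [if_pos h1, if_neg (fun hh : A (S ω) ∧ C ω = c => h2 hh.1)]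
      simp [h2]
    · rw [if_neg h1, if_neg (fun hh : A (S ω) ∧ C ω = c => h1 hh.2)]
    · rw [if_neg h1, if_neg (fun hh : A (S ω) ∧ C ω = c => h1 hh.2)]
  have e2 : cexp p (fun ω => (fun s => if A s then (1:ℝ) else 0) (S ω))
      (fun ω => C ω = c) =
      pr p (fun ω => A (S ω) ∧ C ω = c) / pr p (fun ω => C ω = c) := by
    rw [cexp_def]
    congr 1
    unfold wsum pr
    refine Finset.sum_congr rfl fun ω _ => ?_
    by_cases h1 : C ω = c <;> by_cases h2 : A (S ω)
    · rw [if_pos h1, if_pos (⟨h2, h1⟩ : A (S ω) ∧ C ω = c)]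
      simp [h2]
    · rw [if_pos h1, if_neg (fun hh : A (S ω) ∧ C ω = c => h2 hh.1)]
      simp [h2]
    · rw [if_neg h1, if_neg (fun hh : A (S ω) ∧ C ω = c => h1 hh.2)]
    · rw [if_neg h1, if_neg (fun hh : A (S ω) ∧ C ω = c => h1 hh.2)]
  rw [e1, e2, cexp_def] at h
  rw [cexp_def, cexp_def, div_eq_div_iff hA hc]
  have hc' := hc
  field_simp at h
  -- h should now be a polynomial identity; conclude by cancelling pr p (C = c)
  set WAC := wsum p (fun ω => G (T ω)) (fun ω => A (S ω) ∧ C ω = c) with hWAC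
  set WC := wsum p (fun ω => G (T ω)) (fun ω => C ω = c) with hWC
  set PA := pr p (fun ω => A (S ω) ∧ C ω = c) with hPAd
  set PC := pr p (fun ω => C ω = c) with hPCd
  have h2 : (WAC * PC) * PC = (WC * PA) * PC := by linear_combination PC * h
  have := mul_right_cancel₀ hc h2
  linarith [this]

end Helpers

/-- two-occasion proximal g-formula via outcome confounding bridge
functions: under consistency, positivity, sequential proximal latent randomization,
and latent-level bridge equations for `(h1, h0)`, we have
`E[Y_{ā(1)} | V] = E[h0(W(0), ā(1), X(0)) | V]` for any baseline `V = v(X(0))`. -/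
theorem stmt_8 {Ω 𝒳0 𝒳1 𝒵0 𝒵1 𝒲0 𝒲1 𝒰0 𝒰1 𝒱 : Type*} [Fintype Ω]
    (p : Ω → ℝ) (hp : ∀ ω, 0 ≤ p ω) (hsum : ∑ ω, p ω = 1)
    (A0 A1 : Ω → Bool) (X0 : Ω → 𝒳0) (X1 : Ω → 𝒳1)
    (Z0 : Ω → 𝒵0) (Z1 : Ω → 𝒵1) (W0 : Ω → 𝒲0) (W1 : Ω → 𝒲1)
    (U0 : Ω → 𝒰0) (U1 : Ω → 𝒰1)
    (Y : Ω → ℝ) (Y' : Bool → Bool → Ω → ℝ) (W1' : Bool → Ω → 𝒲1)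
    (h1 : 𝒲0 × 𝒲1 → Bool × Bool → 𝒳0 × 𝒳1 → ℝ)
    (h0 : 𝒲0 → Bool × Bool → 𝒳0 → ℝ)
    (v : 𝒳0 → 𝒱) (a0 a1 : Bool)
    -- (i) consistency and positivity
    (hconsY : ∀ ω, Y ω = Y' (A0 ω) (A1 ω) ω)
    (hconsW : ∀ ω, W1 ω = W1' (A0 ω) ω)
    (hpos0 : ∀ (a : Bool) u0 x0, pr p (fun ω => U0 ω = u0 ∧ X0 ω = x0) ≠ 0 →
      0 < cprob p (fun ω => A0 ω = a) (fun ω => U0 ω = u0 ∧ X0 ω = x0))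
    (hpos1 : ∀ (a a' : Bool) u0 u1 x0 x1,
      pr p (fun ω => A0 ω = a' ∧ U0 ω = u0 ∧ U1 ω = u1 ∧ X0 ω = x0 ∧ X1 ω = x1) ≠ 0 →
      0 < cprob p (fun ω => A1 ω = a)
        (fun ω => A0 ω = a' ∧ U0 ω = u0 ∧ U1 ω = u1 ∧ X0 ω = x0 ∧ X1 ω = x1))
    -- (ii) sequential proximal latent randomization
    (hLR1 : CondIndep p (fun ω => (Z0 ω, Z1 ω, A1 ω))
      (fun ω => (W0 ω, W1' a0 ω, Y' a0 a1 ω))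
      (fun ω => (A0 ω, X0 ω, X1 ω, U0 ω, U1 ω)))
    (hLR0 : CondIndep p (fun ω => (Z0 ω, A0 ω))
      (fun ω => (W0 ω, Y' a0 a1 ω)) (fun ω => (X0 ω, U0 ω)))
    -- (iii) latent-level outcome bridge equations
    (hbridge1 : ∀ u0 u1 x0 x1,
      pr p (fun ω => A0 ω = a0 ∧ A1 ω = a1 ∧ U0 ω = u0 ∧ U1 ω = u1 ∧
        X0 ω = x0 ∧ X1 ω = x1) ≠ 0 →
      cexp p (fun ω => h1 (W0 ω, W1 ω) (a0, a1) (X0 ω, X1 ω))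
          (fun ω => A0 ω = a0 ∧ A1 ω = a1 ∧ U0 ω = u0 ∧ U1 ω = u1 ∧
            X0 ω = x0 ∧ X1 ω = x1) =
        cexp p Y (fun ω => A0 ω = a0 ∧ A1 ω = a1 ∧ U0 ω = u0 ∧ U1 ω = u1 ∧
          X0 ω = x0 ∧ X1 ω = x1))
    (hbridge0 : ∀ u0 x0,
      pr p (fun ω => A0 ω = a0 ∧ U0 ω = u0 ∧ X0 ω = x0) ≠ 0 →
      cexp p (Y' a0 a1) (fun ω => A0 ω = a0 ∧ U0 ω = u0 ∧ X0 ω = x0) =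
        cexp p (fun ω => h0 (W0 ω) (a0, a1) (X0 ω))
          (fun ω => A0 ω = a0 ∧ U0 ω = u0 ∧ X0 ω = x0)) :
    ∀ c : 𝒱, pr p (fun ω => v (X0 ω) = c) ≠ 0 →
      cexp p (Y' a0 a1) (fun ω => v (X0 ω) = c) =
        cexp p (fun ω => h0 (W0 ω) (a0, a1) (X0 ω)) (fun ω => v (X0 ω) = c) := by
  intro c hc
  have key : ∀ u0 x0, pr p (fun ω => U0 ω = u0 ∧ X0 ω = x0) ≠ 0 →
      (∑ ω, if U0 ω = u0 ∧ X0 ω = x0 then p ω * Y' a0 a1 ω else 0) =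
      ∑ ω, if U0 ω = u0 ∧ X0 ω = x0 then p ω * h0 (W0 ω) (a0, a1) (X0 ω) else 0 := by
    intro u0 x0 hcell
    have hiffC : ∀ ω, (U0 ω = u0 ∧ X0 ω = x0) ↔ ((X0 ω, U0 ω) = (x0, u0)) := by
      intro ω
      constructor
      · rintro ⟨h1, h2⟩; simp [h1, h2]
      · intro h; exact ⟨congrArg Prod.snd h, congrArg Prod.fst h⟩
    have hcC : pr p (fun ω => (X0 ω, U0 ω) = (x0, u0)) ≠ 0 := by
      rw [← pr_congr p hiffC]; exact hcell
    have hpos := hpos0 a0 u0 x0 hcell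
    have hAcell : pr p (fun ω => A0 ω = a0 ∧ U0 ω = u0 ∧ X0 ω = x0) ≠ 0 := by
      intro hz
      rw [cprob, hz, zero_div] at hpos
      exact lt_irrefl 0 hpos
    have hiffA : ∀ ω, (A0 ω = a0 ∧ U0 ω = u0 ∧ X0 ω = x0) ↔
        ((fun q : 𝒵0 × Bool => q.2 = a0) (Z0 ω, A0 ω) ∧ (X0 ω, U0 ω) = (x0, u0)) := by
      intro ω
      constructor
      · rintro ⟨h1, h2, h3⟩; exact ⟨h1, by simp [h2, h3]⟩
      · rintro ⟨h1, h2⟩; exact ⟨h1, congrArg Prod.snd h2, congrArg Prod.fst h2⟩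
    have hAC : pr p (fun ω => (fun q : 𝒵0 × Bool => q.2 = a0) (Z0 ω, A0 ω) ∧
        (X0 ω, U0 ω) = (x0, u0)) ≠ 0 := by
      rw [← pr_congr p hiffA]; exact hAcell
    have hstepY := cexp_cond p hLR0 (fun q : 𝒵0 × Bool => q.2 = a0)
      (fun q : 𝒲0 × ℝ => q.2) (x0, u0) hcC hAC
    have hstepH := cexp_cond p hLR0 (fun q : 𝒵0 × Bool => q.2 = a0)
      (fun q : 𝒲0 × ℝ => h0 q.1 (a0, a1) x0) (x0, u0) hcC hAC
    have eY : cexp p (Y' a0 a1) (fun ω => U0 ω = u0 ∧ X0 ω = x0) =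
        cexp p (Y' a0 a1) (fun ω => A0 ω = a0 ∧ U0 ω = u0 ∧ X0 ω = x0) := by
      calc cexp p (Y' a0 a1) (fun ω => U0 ω = u0 ∧ X0 ω = x0)
          = cexp p (fun ω => (fun q : 𝒲0 × ℝ => q.2) (W0 ω, Y' a0 a1 ω))
              (fun ω => (X0 ω, U0 ω) = (x0, u0)) := cexp_congr p hiffC (fun ω _ => rfl)
        _ = cexp p (fun ω => (fun q : 𝒲0 × ℝ => q.2) (W0 ω, Y' a0 a1 ω))
              (fun ω => (fun q : 𝒵0 × Bool => q.2 = a0) (Z0 ω, A0 ω) ∧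
                (X0 ω, U0 ω) = (x0, u0)) := hstepY.symm
        _ = cexp p (Y' a0 a1) (fun ω => A0 ω = a0 ∧ U0 ω = u0 ∧ X0 ω = x0) :=
            (cexp_congr p hiffA (fun ω _ => rfl)).symm
    have eH : cexp p (fun ω => h0 (W0 ω) (a0, a1) (X0 ω))
        (fun ω => U0 ω = u0 ∧ X0 ω = x0) =
        cexp p (fun ω => h0 (W0 ω) (a0, a1) (X0 ω))
          (fun ω => A0 ω = a0 ∧ U0 ω = u0 ∧ X0 ω = x0) := by
      calc cexp p (fun ω => h0 (W0 ω) (a0, a1) (X0 ω)) (fun ω => U0 ω = u0 ∧ X0 ω = x0)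
          = cexp p (fun ω => (fun q : 𝒲0 × ℝ => h0 q.1 (a0, a1) x0) (W0 ω, Y' a0 a1 ω))
              (fun ω => (X0 ω, U0 ω) = (x0, u0)) :=
            cexp_congr p hiffC (fun ω hω => by rw [hω.2])
        _ = cexp p (fun ω => (fun q : 𝒲0 × ℝ => h0 q.1 (a0, a1) x0) (W0 ω, Y' a0 a1 ω))
              (fun ω => (fun q : 𝒵0 × Bool => q.2 = a0) (Z0 ω, A0 ω) ∧
                (X0 ω, U0 ω) = (x0, u0)) := hstepH.symm
        _ = cexp p (fun ω => h0 (W0 ω) (a0, a1) (X0 ω))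
              (fun ω => A0 ω = a0 ∧ U0 ω = u0 ∧ X0 ω = x0) :=
            (cexp_congr p hiffA (fun ω hω => by rw [hω.2.2])).symm
    have ecell : cexp p (Y' a0 a1) (fun ω => U0 ω = u0 ∧ X0 ω = x0) =
        cexp p (fun ω => h0 (W0 ω) (a0, a1) (X0 ω)) (fun ω => U0 ω = u0 ∧ X0 ω = x0) := by
      rw [eY, hbridge0 u0 x0 hAcell, ← eH]
    have hmul : ∀ f : Ω → ℝ,
        (∑ ω, if U0 ω = u0 ∧ X0 ω = x0 then p ω * f ω else 0) =
        cexp p f (fun ω => U0 ω = u0 ∧ X0 ω = x0) *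
          pr p (fun ω => U0 ω = u0 ∧ X0 ω = x0) := by
      intro f
      rw [cexp, div_mul_cancel₀ _ hcell]
      exact Finset.sum_congr rfl fun ω _ => by split_ifs <;> rfl
    rw [hmul, hmul, ecell]
  suffices hnum : (∑ ω, if v (X0 ω) = c then p ω * Y' a0 a1 ω else 0) =
      ∑ ω, if v (X0 ω) = c then p ω * h0 (W0 ω) (a0, a1) (X0 ω) else 0 by
    unfold cexp
    rw [hnum]
  rw [← sub_eq_zero, ← Finset.sum_sub_distrib]
  have hterm : ∀ ω : Ω, ((if v (X0 ω) = c then p ω * Y' a0 a1 ω else 0) -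
      (if v (X0 ω) = c then p ω * h0 (W0 ω) (a0, a1) (X0 ω) else 0)) =
      (if v (X0 ω) = c then p ω * Y' a0 a1 ω - p ω * h0 (W0 ω) (a0, a1) (X0 ω) else 0) := by
    intro ω; split_ifs <;> ring
  rw [Finset.sum_congr rfl fun ω _ => hterm ω]
  rw [← Finset.sum_fiberwise_of_maps_to (g := fun ω => (U0 ω, X0 ω))
    (t := Finset.univ.image fun ω => (U0 ω, X0 ω))
    (fun ω _ => Finset.mem_image_of_mem _ (Finset.mem_univ ω))]
  refine Finset.sum_eq_zero ?_
  rintro ⟨u0, x0⟩ _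
  rw [Finset.sum_filter]
  by_cases hv : v x0 = c
  · have e : ∀ ω : Ω, (if (U0 ω, X0 ω) = (u0, x0) then
        (if v (X0 ω) = c then p ω * Y' a0 a1 ω - p ω * h0 (W0 ω) (a0, a1) (X0 ω) else 0)
        else 0) =
        (if U0 ω = u0 ∧ X0 ω = x0 then
          p ω * Y' a0 a1 ω - p ω * h0 (W0 ω) (a0, a1) (X0 ω) else 0) := by
      intro ω
      by_cases hg : U0 ω = u0 ∧ X0 ω = x0
      · rw [if_pos (by simp [hg.1, hg.2]), if_pos (by rw [hg.2]; exact hv), if_pos hg]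
      · rw [if_neg (fun h => hg ⟨congrArg Prod.fst h, congrArg Prod.snd h⟩), if_neg hg]
    rw [Finset.sum_congr rfl fun ω _ => e ω]
    by_cases hcell : pr p (fun ω => U0 ω = u0 ∧ X0 ω = x0) = 0
    · refine Finset.sum_eq_zero fun ω _ => ?_
      by_cases hg : U0 ω = u0 ∧ X0 ω = x0
      · rw [if_pos hg, pr_zero_of p hp hcell hg]; ring
      · rw [if_neg hg]
    · have e2 : (∑ ω, if U0 ω = u0 ∧ X0 ω = x0 then
          p ω * Y' a0 a1 ω - p ω * h0 (W0 ω) (a0, a1) (X0 ω) else 0) =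
          (∑ ω, if U0 ω = u0 ∧ X0 ω = x0 then p ω * Y' a0 a1 ω else 0) -
          (∑ ω, if U0 ω = u0 ∧ X0 ω = x0 then p ω * h0 (W0 ω) (a0, a1) (X0 ω) else 0) := by
        rw [← Finset.sum_sub_distrib]
        exact Finset.sum_congr rfl fun ω _ => by split_ifs <;> ring
      rw [e2, key u0 x0 hcell, sub_self]
  · refine Finset.sum_eq_zero fun ω _ => ?_
    by_cases hg : (U0 ω, X0 ω) = (u0, x0)
    · have hx : X0 ω = x0 := congrArg Prod.snd hg
      rw [if_pos hg, if_neg (by rw [hx]; exact hv)]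
    · rw [if_neg hg]
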